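/- Let W¹ and W² be two weight filtrations of nilpotent cones on a Lie algebra g, split by a commuting pair of semisimple grading elements (Y, Ŷ) with integral joint eigenspace decomposition g = ⊕ g_{a,b}, such that W¹_ℓ(g) = ⊕_{a≤ℓ} g_{a,b} and W²_ℓ(g) = ⊕_{a+b≤ℓ} g_{a,b}. Suppose c ⊂ g is a subalgebra with c ⊂ W²_0(g) and c ⊂ W¹_0(g), and suppose there is N̂ ∈ g_{0,-2} with centralizer satisfying c(N̂) ⊂ ⊕_{b≤0} g_{a,b}, and an element N ∈ c-centralized nilpotent of the form N = Σ_{a≤0} N_a with N_a ∈ g_{a,-a-2}, N_0 = N̂. Then for every X ∈ c with [N, X] = 0: if X ∈ W¹_ℓ(c) for some ℓ < 0, then X ∈ W²_ℓ(c). In particular W¹_ℓ(c) ⊂ W²_ℓ(c) for all ℓ. -/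

import Mathlib

open DirectSum

section aux

variable {L : Type*} [LieRing L] [LieAlgebra ℂ L]
variable (g : ℤ → ℤ → Submodule ℂ L)
variable [D : Decomposition (fun ab : ℤ × ℤ => g ab.1 ab.2)]

/-- The `(a,b)` component of `x` as an element of `L`. -/
noncomputable def prj13 (ab : ℤ × ℤ) (x : L) : L :=
  (decompose (fun ab : ℤ × ℤ => g ab.1 ab.2) x ab : L)

lemma prj13_mem (ab : ℤ × ℤ) (x : L) : prj13 g ab x ∈ g ab.1 ab.2 :=
  SetLike.coe_mem _

lemma prj13_add (ab : ℤ × ℤ) (x y : L) :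
    prj13 g ab (x + y) = prj13 g ab x + prj13 g ab y := by
  simp [prj13, decompose_add, DirectSum.add_apply]

lemma prj13_zero (ab : ℤ × ℤ) : prj13 g ab (0 : L) = 0 := by
  simp [prj13]

lemma prj13_sum {ι' : Type*} (ab : ℤ × ℤ) (s : Finset ι') (f : ι' → L) :
    prj13 g ab (∑ i ∈ s, f i) = ∑ i ∈ s, prj13 g ab (f i) := by
  classical
  induction s using Finset.induction_on with
  | empty => simp [prj13]
  | insert _ _ h ih => simp [Finset.sum_insert h, prj13_add, ih]

lemma sum13 (x : L) [∀ (i : ℤ × ℤ) (y : g i.1 i.2), Decidable (y ≠ 0)] :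
    (∑ ab ∈ (decompose (fun ab : ℤ × ℤ => g ab.1 ab.2) x).support, prj13 g ab x) = x :=
  sum_support_decompose _ x

lemma mem_iSup_iff13 (P : ℤ × ℤ → Prop) (x : L) :
    x ∈ (⨆ (ab : ℤ × ℤ) (_ : P ab), g ab.1 ab.2) ↔
      ∀ ab : ℤ × ℤ, ¬ P ab → prj13 g ab x = 0 := by
  classical
  constructor
  · intro hx
    refine Submodule.iSup_induction (motive := fun y => ∀ ab : ℤ × ℤ, ¬ P ab → prj13 g ab y = 0)
      (fun ab : ℤ × ℤ => ⨆ (_ : P ab), g ab.1 ab.2) hx ?_ ?_ ?_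
    · intro i y hy ab hab
      have hy' : y ∈ ⨆ (_ : P i), g i.1 i.2 := hy
      by_cases hPi : P i
      · rw [iSup_pos hPi] at hy'
        have hne : i ≠ ab := fun h => hab (h ▸ hPi)
        exact decompose_of_mem_ne (ℳ := fun ab : ℤ × ℤ => g ab.1 ab.2) (i := i) hy' hne
      · rw [iSup_neg hPi] at hy'
        simp only [Submodule.mem_bot] at hy'
        simp [hy', prj13_zero]
    · intro ab hab; exact prj13_zero g ab
    · intro y z hy hz ab hab
      rw [prj13_add, hy ab hab, hz ab hab, add_zero]
  · intro h
    rw [← sum13 g x]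
    refine Submodule.sum_mem _ ?_
    intro ab hab
    have hne : prj13 g ab x ≠ 0 := by
      intro h0
      rw [DFinsupp.mem_support_iff] at hab
      exact hab (Subtype.ext h0)
    have hP : P ab := by
      by_contra hP
      exact hne (h ab hP)
    exact Submodule.mem_iSup_of_mem ab (Submodule.mem_iSup_of_mem hP (prj13_mem g ab x))

lemma lie_sum13 {ι' : Type*} (x : L) (s : Finset ι') (f : ι' → L) :
    ⁅x, ∑ i ∈ s, f i⁆ = ∑ i ∈ s, ⁅x, f i⁆ := by
  classical
  induction s using Finset.induction_on with
  | empty => simp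
  | insert _ _ h ih => simp [Finset.sum_insert h, lie_add, ih]

lemma sum_lie13 {ι' : Type*} (x : L) (s : Finset ι') (f : ι' → L) :
    ⁅∑ i ∈ s, f i, x⁆ = ∑ i ∈ s, ⁅f i, x⁆ := by
  classical
  induction s using Finset.induction_on with
  | empty => simp
  | insert _ _ h ih => simp [Finset.sum_insert h, add_lie, ih]

lemma prj13_bracket
    (hbracket : ∀ a b a' b' : ℤ, ∀ x ∈ g a b, ∀ y ∈ g a' b',
      ⁅x, y⁆ ∈ g (a + a') (b + b'))
    (p q : ℤ) (x : L) (hx : x ∈ g p q) (y : L) (a b : ℤ) :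
    prj13 g (a, b) ⁅x, y⁆ = ⁅x, prj13 g (a - p, b - q) y⁆ := by
  classical
  conv_lhs => rw [show y = ∑ ab ∈ (decompose (fun ab : ℤ × ℤ => g ab.1 ab.2) y).support,
      prj13 g ab y from (sum13 g y).symm]
  rw [lie_sum13, prj13_sum]
  rw [Finset.sum_eq_single ((a - p, b - q) : ℤ × ℤ)]
  · by_cases hmem : ((a - p, b - q) : ℤ × ℤ) ∈
        (decompose (fun ab : ℤ × ℤ => g ab.1 ab.2) y).support
    · have hm := hbracket p q (a - p) (b - q) x hx _ (prj13_mem g (a - p, b - q) y)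
      have h1 : p + (a - p) = a := by ring
      have h2 : q + (b - q) = b := by ring
      rw [h1, h2] at hm
      exact decompose_of_mem_same _ hm
    · have h0 : prj13 g (a - p, b - q) y = 0 := by
        rw [DFinsupp.notMem_support_iff] at hmem
        simp [prj13, hmem]
      rw [h0, lie_zero, prj13_zero]
  · intro ab _ hne
    have hm := hbracket p q ab.1 ab.2 x hx _ (prj13_mem g ab y)
    refine decompose_of_mem_ne (ℳ := fun ab : ℤ × ℤ => g ab.1 ab.2)
      (i := ((p + ab.1, q + ab.2) : ℤ × ℤ)) hm ?_
    intro hcon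
    apply hne
    have h1 : p + ab.1 = a := congrArg Prod.fst hcon
    have h2 : q + ab.2 = b := congrArg Prod.snd hcon
    ext <;> simp <;> omega
  · intro hmem
    have h0 : prj13 g (a - p, b - q) y = 0 := by
      rw [DFinsupp.notMem_support_iff] at hmem
      simp [prj13, hmem]
    rw [h0, lie_zero, prj13_zero]

end aux

/-- Let `g = ⊕ g_{a,b}` be the joint integral eigenspace decomposition of a
commuting pair of grading elements splitting two weight filtrations
`W¹_ℓ = ⊕_{a≤ℓ} g_{a,b}` and `W²_ℓ = ⊕_{a+b≤ℓ} g_{a,b}`.  Let `c ⊆ W¹_0 ∩ W²_0` be a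
subalgebra, `N̂ ∈ g_{0,-2}` with centralizer contained in `⊕_{b≤0} g_{a,b}`, and
`N = N̂ + Σ_{a<0} N_a` with `N_a ∈ g_{a,-a-2}`.  Then every `X ∈ c` with `[N, X] = 0`
satisfies: `X ∈ W¹_ℓ → X ∈ W²_ℓ` for every `ℓ`. -/
theorem stmt13
    (L : Type*) [LieRing L] [LieAlgebra ℂ L] [FiniteDimensional ℂ L]
    (g : ℤ → ℤ → Submodule ℂ L)
    (hinternal : DirectSum.IsInternal (fun ab : ℤ × ℤ => g ab.1 ab.2))
    (hbracket : ∀ a b a' b' : ℤ, ∀ x ∈ g a b, ∀ y ∈ g a' b',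
      ⁅x, y⁆ ∈ g (a + a') (b + b'))
    (W1 W2 : ℤ → Submodule ℂ L)
    (hW1 : ∀ ℓ : ℤ, W1 ℓ = ⨆ (ab : ℤ × ℤ) (_ : ab.1 ≤ ℓ), g ab.1 ab.2)
    (hW2 : ∀ ℓ : ℤ, W2 ℓ = ⨆ (ab : ℤ × ℤ) (_ : ab.1 + ab.2 ≤ ℓ), g ab.1 ab.2)
    (c : Submodule ℂ L)
    (hc_sub : ∀ x y, x ∈ c → y ∈ c → ⁅x, y⁆ ∈ c)
    (hcW1 : c ≤ W1 0) (hcW2 : c ≤ W2 0)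
    (Nhat : L) (hNhat : Nhat ∈ g 0 (-2))
    (hcent : ∀ x : L, ⁅Nhat, x⁆ = 0 →
      x ∈ ⨆ (ab : ℤ × ℤ) (_ : ab.2 ≤ 0), g ab.1 ab.2)
    (N : L)
    (hN : N - Nhat ∈ ⨆ (ab : ℤ × ℤ) (_ : ab.1 < 0 ∧ ab.2 = -ab.1 - 2), g ab.1 ab.2) :
    ∀ X ∈ c, ⁅N, X⁆ = 0 → ∀ ℓ : ℤ, X ∈ W1 ℓ → X ∈ W2 ℓ := by
  classical
  letI D : Decomposition (fun ab : ℤ × ℤ => g ab.1 ab.2) := hinternal.chooseDecomposition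
  intro X hXc hNX ℓ hXW1
  set N' : L := N - Nhat with hN'def
  have hNsplit : N = Nhat + N' := by rw [hN'def]; abel
  -- components of X above a-weight ℓ vanish
  have hXW1' : ∀ ab : ℤ × ℤ, ¬ ab.1 ≤ ℓ → prj13 g ab X = 0 := by
    rw [hW1] at hXW1
    exact (mem_iSup_iff13 g _ X).mp hXW1
  -- components of N'
  have hN'c : ∀ ab : ℤ × ℤ, ¬ (ab.1 < 0 ∧ ab.2 = -ab.1 - 2) → prj13 g ab N' = 0 :=
    (mem_iSup_iff13 g _ N').mp hN
  -- key step: under a downward-induction hypothesis, components centralize Nhat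
  have key : ∀ a b : ℤ,
      (∀ a' b' : ℤ, a < a' → ℓ < a' + b' → prj13 g (a', b') X = 0) →
      ℓ < a + b → ⁅Nhat, prj13 g (a, b) X⁆ = 0 := by
    intro a b IH hab
    have h0 : prj13 g (a, b - 2) ⁅N, X⁆ = 0 := by rw [hNX, prj13_zero]
    rw [hNsplit, add_lie, prj13_add] at h0
    have h1 : prj13 g (a, b - 2) ⁅Nhat, X⁆ = ⁅Nhat, prj13 g (a, b) X⁆ := by
      have := prj13_bracket g hbracket 0 (-2) Nhat hNhat X a (b - 2)
      simpa using this
    have h2 : prj13 g (a, b - 2) ⁅N', X⁆ = 0 := by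
      conv_lhs => rw [show N' = ∑ ab ∈ (decompose (fun ab : ℤ × ℤ => g ab.1 ab.2) N').support,
          prj13 g ab N' from (sum13 g N').symm]
      rw [sum_lie13, prj13_sum]
      refine Finset.sum_eq_zero ?_
      intro ab hab'
      have hne : prj13 g ab N' ≠ 0 := by
        intro h0'
        rw [DFinsupp.mem_support_iff] at hab'
        exact hab' (Subtype.ext h0')
      have hcond : ab.1 < 0 ∧ ab.2 = -ab.1 - 2 := by
        by_contra hc'
        exact hne (hN'c ab hc')
      rw [prj13_bracket g hbracket ab.1 ab.2 _ (prj13_mem g ab N') X a (b - 2)]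
      have hXz : prj13 g (a - ab.1, b - 2 - ab.2) X = 0 := by
        apply IH
        · omega
        · omega
      rw [hXz, lie_zero]
    rw [h1, h2, add_zero] at h0
    exact h0
  -- the downward induction
  have claim : ∀ n : ℕ, ∀ a b : ℤ, ℓ - a ≤ (n : ℤ) → ℓ < a + b → prj13 g (a, b) X = 0 := by
    intro n
    induction n using Nat.strong_induction_on with
    | _ n IHn =>
      intro a b hna hab
      by_cases hla : ℓ < a
      · exact hXW1' (a, b) (by simp; omega)
      · push_neg at hla
        have IH : ∀ a' b' : ℤ, a < a' → ℓ < a' + b' → prj13 g (a', b') X = 0 := by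
          intro a' b' haa hab'
          by_cases hla' : ℓ < a'
          · exact hXW1' (a', b') (by simp; omega)
          · push_neg at hla'
            have hm : (ℓ - a').toNat < n := by omega
            exact IHn _ hm a' b' (by omega) hab'
        have hcomm := key a b IH hab
        have hmem := hcent _ hcomm
        have hvan := (mem_iSup_iff13 g _ _).mp hmem (a, b) (by simp; omega)
        -- the (a,b) component of prj13 g (a,b) X is itself
        have hself : prj13 g (a, b) (prj13 g (a, b) X) = prj13 g (a, b) X :=
          decompose_of_mem_same _ (prj13_mem g (a, b) X)
        rw [hself] at hvan
        exact hvan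
  rw [hW2]
  rw [mem_iSup_iff13]
  intro ab hab
  simp only [not_le] at hab
  exact claim (ℓ - ab.1).toNat ab.1 ab.2 (Int.self_le_toNat _) hab
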